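/- Let W_α be a subnormal weighted shift with moment sequence γ. Then γ satisfies a finite linear recurrence (is recursively generated) if and only if there exist n₀, k ∈ ℕ such that det((γ_{n₀+i+j})_{0≤i,j≤k}) = 0. -/

import Mathlib

open scoped Matrix

/-- Key propagation lemma: a kernel vector of one Hankel block gives a linear
relation among the moments at every later shift. -/
lemma hankel_kernel_extend (γ : ℕ → ℝ)
    (hsub : ∀ k n : ℕ, (Matrix.of fun i j : Fin (k + 1) => γ (n + i + j)).PosSemidef)
    (n₀ k : ℕ) (c : ℕ → ℝ) (hc0 : ∀ j, k + 1 ≤ j → c j = 0)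
    (hv : ∀ i : Fin (k + 1),
      ∑ j ∈ Finset.range (k + 1), γ (n₀ + i + j) * c j = 0)
    (t : ℕ) :
    ∑ j ∈ Finset.range (k + 1), γ (n₀ + t + j) * c j = 0 := by
  have hPSD := hsub (k + t) n₀
  set B : Matrix (Fin (k + t + 1)) (Fin (k + t + 1)) ℝ :=
    Matrix.of fun i j : Fin (k + t + 1) => γ (n₀ + i + j) with hB
  set w : Fin (k + t + 1) → ℝ := fun j => c j with hw
  have hrow : ∀ i : Fin (k + t + 1),
      (B *ᵥ w) i = ∑ j ∈ Finset.range (k + 1), γ (n₀ + i + j) * c j := by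
    intro i
    have h1 : (B *ᵥ w) i = ∑ j ∈ Finset.range (k + t + 1), γ (n₀ + i + j) * c j := by
      simp only [Matrix.mulVec, dotProduct, hB, Matrix.of_apply, hw]
      exact Fin.sum_univ_eq_sum_range (fun j => γ (n₀ + i + j) * c j) (k + t + 1)
    rw [h1]
    refine (Finset.sum_subset (Finset.range_subset_range.2 (by omega)) ?_).symm
    intro x _ hx
    rw [hc0 x (by simpa using hx), mul_zero]
  have hform : star w ⬝ᵥ B *ᵥ w = 0 := by
    have : star w ⬝ᵥ B *ᵥ w = ∑ i ∈ Finset.range (k + t + 1),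
        c i * ∑ j ∈ Finset.range (k + 1), γ (n₀ + i + j) * c j := by
      simp only [dotProduct, Pi.star_apply, RCLike.star_def, conj_trivial]
      rw [← Fin.sum_univ_eq_sum_range
        (fun i => c i * ∑ j ∈ Finset.range (k + 1), γ (n₀ + i + j) * c j) (k + t + 1)]
      exact Finset.sum_congr rfl fun i _ => by rw [hrow i]
    rw [this]
    refine Finset.sum_eq_zero fun i hi => ?_
    by_cases h : i < k + 1
    · have := hv ⟨i, h⟩
      simp only [Fin.val_mk] at this
      rw [this, mul_zero]
    · rw [hc0 i (by omega), zero_mul]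
  have hker : B *ᵥ w = 0 := (hPSD.dotProduct_mulVec_zero_iff w).mp hform
  have := congrFun hker ⟨t, by omega⟩
  rw [hrow ⟨t, by omega⟩] at this
  simpa using this

theorem subnormal_recursively_generated_iff (γ : ℕ → ℝ) (α : ℕ → ℝ)
    (hα : ∀ n, 0 < α n) (hγ0 : γ 0 = 1) (hγ : ∀ n, γ (n + 1) = (α n) ^ 2 * γ n)
    (hsub : ∀ k n : ℕ, (Matrix.of fun i j : Fin (k + 1) => γ (n + i + j)).PosSemidef) :
    (∃ r : ℕ, 1 ≤ r ∧ ∃ a : Fin r → ℝ, ∀ n : ℕ,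
        γ (n + r) = ∑ j : Fin r, a j * γ (n + j)) ↔
      ∃ n₀ k : ℕ, (Matrix.of fun i j : Fin (k + 1) => γ (n₀ + i + j)).det = 0 := by
  classical
  have hpos : ∀ n, 0 < γ n := by
    intro n
    induction n with
    | zero => simp [hγ0]
    | succ n ih => rw [hγ n]; exact mul_pos (pow_pos (hα n) 2) ih
  constructor
  · rintro ⟨r, hr, a, ha⟩
    refine ⟨0, r, ?_⟩
    rw [← Matrix.exists_mulVec_eq_zero_iff]
    refine ⟨fun j : Fin (r + 1) => if h : (j : ℕ) < r then a ⟨j, h⟩ else -1, ?_, ?_⟩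
    · intro h
      have := congrFun h (Fin.last r)
      simp [Fin.val_last] at this
    · funext i
      simp only [Matrix.mulVec, dotProduct, Matrix.of_apply, Pi.zero_apply]
      rw [Fin.sum_univ_castSucc]
      simp only [Fin.coe_castSucc, Fin.val_last]
      rw [dif_neg (lt_irrefl r)]
      have hrel := ha (i : ℕ)
      have h1 : ∑ j : Fin r, γ (0 + (i : ℕ) + (j : ℕ))
            * (if h : (j : ℕ) < r then a ⟨(j : ℕ), h⟩ else -1)
          = ∑ j : Fin r, a j * γ ((i : ℕ) + (j : ℕ)) := by
        refine Finset.sum_congr rfl fun j _ => ?_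
        rw [dif_pos j.isLt, zero_add, mul_comm, Fin.eta]
      rw [h1, ← hrel, zero_add]
      ring
  · rintro ⟨n₀, k, hdet⟩
    obtain ⟨v, hv0, hv⟩ := (Matrix.exists_mulVec_eq_zero_iff).mpr hdet
    set c : ℕ → ℝ := fun j => if h : j < k + 1 then v ⟨j, h⟩ else 0 with hcdef
    have hc0 : ∀ j, k + 1 ≤ j → c j = 0 := fun j hj => dif_neg (by omega)
    have hcv : ∀ j : Fin (k + 1), c j = v j := fun j => by
      simp [hcdef, j.isLt]
      intro h; have := j.isLt; omega
    have hrows : ∀ i : Fin (k + 1),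
        ∑ j ∈ Finset.range (k + 1), γ (n₀ + i + j) * c j = 0 := by
      intro i
      have := congrFun hv i
      simp only [Matrix.mulVec, dotProduct, Matrix.of_apply, Pi.zero_apply] at this
      rw [← this, ← Fin.sum_univ_eq_sum_range (fun j => γ (n₀ + i + j) * c j) (k + 1)]
      exact Finset.sum_congr rfl fun j _ => by rw [hcv j]
    have key : ∀ t : ℕ, ∑ j ∈ Finset.range (k + 1), γ (n₀ + t + j) * c j = 0 :=
      hankel_kernel_extend γ hsub n₀ k c hc0 hrows
    -- the largest index with nonzero coefficient
    obtain ⟨j₀, hj₀⟩ := Function.ne_iff.mp hv0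
    set m := Nat.findGreatest (fun j => c j ≠ 0) k with hm
    have hj₀c : c (j₀ : ℕ) ≠ 0 := by rw [hcv j₀]; simpa using hj₀
    have hcm : c m ≠ 0 :=
      Nat.findGreatest_spec (P := fun j => c j ≠ 0) (Nat.lt_succ_iff.mp j₀.isLt) hj₀c
    have hmk : m ≤ k := Nat.findGreatest_le k
    have hczero : ∀ j, m < j → c j = 0 := by
      intro j hj
      by_cases h : j ≤ k
      · by_contra hne
        exact absurd (Nat.le_findGreatest (P := fun j => c j ≠ 0) h hne) (by omega)
      · exact hc0 j (by omega)
    -- trimmed relation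
    have key' : ∀ t : ℕ, γ (n₀ + t + m) * c m
        + ∑ j ∈ Finset.range m, γ (n₀ + t + j) * c j = 0 := by
      intro t
      have h1 : ∑ j ∈ Finset.range (m + 1), γ (n₀ + t + j) * c j = 0 := by
        rw [Finset.sum_subset (Finset.range_subset_range.2 (by omega : m + 1 ≤ k + 1))
          (fun x _ hx => by rw [hczero x (by simpa using hx), mul_zero])]
        exact key t
      rw [Finset.sum_range_succ] at h1
      linarith
    have hm1 : 1 ≤ m := by
      by_contra h
      have hm0 : m = 0 := by omega
      have := key' 0
      rw [hm0] at this
      simp only [Finset.range_zero, Finset.sum_empty, add_zero] at this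
      rw [hm0] at hcm
      rcases mul_eq_zero.mp this with h' | h'
      · exact absurd h' (ne_of_gt (hpos _))
      · exact hcm h'
    set b : ℕ → ℝ := fun j => if n₀ ≤ j then -c (j - n₀) / c m else 0 with hbdef
    refine ⟨n₀ + m, le_trans hm1 (Nat.le_add_left m n₀), fun j => b (j : ℕ), fun n => ?_⟩
    have hsum : ∑ j : Fin (n₀ + m), b (j : ℕ) * γ (n + j)
        = ∑ j ∈ Finset.range (n₀ + m), b j * γ (n + j) :=
      Fin.sum_univ_eq_sum_range (fun j => b j * γ (n + j)) (n₀ + m)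
    rw [hsum]
    have hsplit : ∑ j ∈ Finset.range n₀, b j * γ (n + j)
        + ∑ j ∈ Finset.Ico n₀ (n₀ + m), b j * γ (n + j)
        = ∑ j ∈ Finset.range (n₀ + m), b j * γ (n + j) :=
      Finset.sum_range_add_sum_Ico _ (by omega)
    have hzero1 : ∑ j ∈ Finset.range n₀, b j * γ (n + j) = 0 :=
      Finset.sum_eq_zero fun j hj => by
        rw [hbdef]
        simp only
        rw [if_neg (by simp at hj; omega), zero_mul]
    have hico : ∑ j ∈ Finset.Ico n₀ (n₀ + m), b j * γ (n + j)
        = ∑ j ∈ Finset.range m, (-c j / c m) * γ (n + n₀ + j) := by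
      rw [Finset.sum_Ico_eq_sum_range]
      refine Finset.sum_congr (by congr 1; omega) fun j _ => ?_
      rw [hbdef]
      simp only
      rw [if_pos (by omega : n₀ ≤ n₀ + j),
        show n₀ + j - n₀ = j from by omega,
        show n + (n₀ + j) = n + n₀ + j from by omega]
    have hrel := key' n
    have hfin : ∑ j ∈ Finset.range m, (-c j / c m) * γ (n + n₀ + j)
        = γ (n + (n₀ + m)) := by
      have h2 : ∑ j ∈ Finset.range m, (-c j / c m) * γ (n + n₀ + j)
          = (-(∑ j ∈ Finset.range m, γ (n₀ + n + j) * c j)) / c m := by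
        rw [← Finset.sum_neg_distrib, Finset.sum_div]
        refine Finset.sum_congr rfl fun j _ => ?_
        rw [show n + n₀ + j = n₀ + n + j by omega]
        ring
      rw [h2]
      have : γ (n₀ + n + m) * c m = -(∑ j ∈ Finset.range m, γ (n₀ + n + j) * c j) := by
        linarith [key' n]
      rw [← this]
      rw [show n + (n₀ + m) = n₀ + n + m by omega]
      field_simp
    rw [← hsplit, hzero1, zero_add, hico, hfin]
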